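/- In the two-target normal game on the 1×n board where a player wins by achieving either SSSS = [S,S,S,S] or OOOO = [O,O,O,O], for every n the game is a draw: neither player can force a win. -/

import Mathlib

/-- The two letters of the SOS game. -/
inductive Letter : Type
  | S : Letter
  | O : Letter
  deriving DecidableEq

open Letter

/-- The target string `t` occurs left-to-right as a consecutive block on the
linear board `b`. -/
def Achieves {n : ℕ} (t : List Letter) (b : Fin n → Option Letter) : Prop :=
  ∃ i : ℕ, ∀ j : ℕ, (hj : j < t.length) → ∃ h : i + j < n,
    b ⟨i + j, h⟩ = some (t.get ⟨j, hj⟩)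

/-- `Force Win m w b`: the player to move in position `b` (with `m` remaining moves,
i.e. `m` empty cells) can force a win when `w = true`, resp. can force at least a
draw when `w = false`, in the normal game whose winning boards are given by `Win`
(a player wins if the board satisfies `Win` immediately after their move). -/
def Force {α : Type} [DecidableEq α] (Win : (α → Option Letter) → Prop) :
    ℕ → Bool → (α → Option Letter) → Prop
  | 0, w, _ => w = false
  | m + 1, w, b => ∃ i : α, ∃ x : Letter, b i = none ∧
      (Win (Function.update b i (some x)) ∨
        ¬ Force Win m (!w) (Function.update b i (some x)))

/-- A board wins the two-target game if it achieves SSSS or achieves OOOO. -/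
def WinSSSSOOOO {n : ℕ} (b : Fin n → Option Letter) : Prop :=
  Achieves [S, S, S, S] b ∨ Achieves [O, O, O, O] b

/-! ### auxiliary -/

def op : Letter → Letter
  | S => O
  | O => S

lemma op_op (x : Letter) : op (op x) = x := by cases x <;> rfl

lemma op_ne (x : Letter) : op x ≠ x := by cases x <;> simp [op]

variable {n : ℕ}

/-- board read at a natural number index, `none` out of range. -/
def bb (b : Fin n → Option Letter) (i : ℕ) : Option Letter :=
  if h : i < n then b ⟨i, h⟩ else none

lemma bb_coe (b : Fin n → Option Letter) (c : Fin n) : bb b c.1 = b c := by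
  simp [bb, c.2]

lemma bb_update (b : Fin n → Option Letter) (c : Fin n) (v : Option Letter) (i : ℕ) :
    bb (Function.update b c v) i = if i = c.1 then v else bb b i := by
  by_cases h : i < n
  · simp only [bb, dif_pos h, Function.update_apply]
    by_cases hic : i = c.1
    · simp [Fin.ext_iff, hic]
    · simp [Fin.ext_iff, hic]
  · have hne : i ≠ c.1 := by intro e; exact h (e ▸ c.2)
    simp [bb, h, hne]

lemma filled_stable {b : Fin n → Option Letter} (c : Fin n) (hc : b c = none) (v : Option Letter) :
    ∀ z x, bb b z = some x → bb (Function.update b c v) z = some x := by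
  intro z x hz
  rw [bb_update]
  have : z ≠ c.1 := by
    intro e
    rw [e, bb_coe, hc] at hz
    cases hz
  simp [this, hz]

def Dead (b : Fin n → Option Letter) (w : ℕ) : Prop :=
  ∃ c d x y, w ≤ c ∧ c ≤ w+3 ∧ w ≤ d ∧ d ≤ w+3 ∧ bb b c = some x ∧ bb b d = some y ∧ x ≠ y

lemma dead_mono {b b' : Fin n → Option Letter}
    (h : ∀ z x, bb b z = some x → bb b' z = some x) {w : ℕ} (hd : Dead b w) : Dead b' w := by
  obtain ⟨c, d, x, y, h1, h2, h3, h4, h5, h6, h7⟩ := hd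
  exact ⟨c, d, x, y, h1, h2, h3, h4, h c x h5, h d y h6, h7⟩

def EPair (P : Set ℕ) (b : Fin n → Option Letter) (w : ℕ) : Prop :=
  ∃ i ∈ P, w ≤ i ∧ i+1 ≤ w+3 ∧ bb b i = none ∧ bb b (i+1) = none

structure GInv (P : Set ℕ) (b : Fin n → Option Letter) : Prop where
  hbnd : ∀ i ∈ P, i + 1 < n
  hdisj : ∀ i ∈ P, i + 1 ∉ P
  hC1 : ∀ i ∈ P, (bb b i = none ∧ bb b (i+1) = none) ∨
      (∃ x, bb b i = some x ∧ bb b (i+1) = some (op x))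
  hC2 : ∀ w, w + 3 < n → Dead b w ∨ EPair P b w
  hC5 : ∀ c, c + 1 < n → (∀ i ∈ P, c ≠ i ∧ c ≠ i+1) →
      ∀ i ∈ P, bb b i = none → bb b (i+1) = none → c < i

/-! ### counting empties -/

def ecount (b : Fin n → Option Letter) : ℕ :=
  (Finset.univ.filter (fun i => b i = none)).card

lemma ecount_update {b : Fin n → Option Letter} (c : Fin n) (hc : b c = none) (x : Letter) :
    ecount (Function.update b c (some x)) = ecount b - 1 := by
  unfold ecount
  have hset : (Finset.univ.filter (fun i => Function.update b c (some x) i = none))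
      = (Finset.univ.filter (fun i => b i = none)).erase c := by
    ext d
    simp only [Finset.mem_filter, Finset.mem_erase, Finset.mem_univ, true_and,
      Function.update_apply]
    by_cases hdc : d = c
    · simp [hdc]
    · simp [hdc]
  rw [hset, Finset.card_erase_of_mem]
  simp [hc]

lemma exists_none {b : Fin n → Option Letter} (h : ecount b ≠ 0) : ∃ c, b c = none := by
  have := Finset.card_pos.1 (Nat.pos_of_ne_zero h)
  obtain ⟨c, hc⟩ := this
  exact ⟨c, (Finset.mem_filter.1 hc).2⟩

lemma ecount_empty : ecount (fun _ : Fin n => none) = n := by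
  unfold ecount
  simp
/-! ### filling an orphan cell (any letter) preserves the invariant -/

lemma orphan_fill {P : Set ℕ} {b : Fin n → Option Letter} (hI : GInv P b)
    (c : Fin n) (hc : b c = none) (horb : ∀ i ∈ P, c.1 ≠ i ∧ c.1 ≠ i+1) (x : Letter) :
    GInv P (Function.update b c (some x)) := by
  set b2 := Function.update b c (some x) with hb2
  have hbbc : bb b c.1 = none := by rw [bb_coe, hc]
  have hstable : ∀ z v, bb b z = some v → bb b2 z = some v := filled_stable c hc (some x)
  have hpaircell : ∀ i ∈ P, bb b2 i = bb b i ∧ bb b2 (i+1) = bb b (i+1) := by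
    intro i hi
    have h1 : i ≠ c.1 := fun e => (horb i hi).1 e.symm
    have h2 : i + 1 ≠ c.1 := fun e => (horb i hi).2 e.symm
    constructor <;> rw [hb2, bb_update]
    · rw [if_neg h1]
    · rw [if_neg h2]
  constructor
  · exact hI.hbnd
  · exact hI.hdisj
  · intro i hi
    rw [(hpaircell i hi).1, (hpaircell i hi).2]
    exact hI.hC1 i hi
  · intro w hw
    rcases hI.hC2 w hw with hd | hp
    · exact Or.inl (dead_mono hstable hd)
    · obtain ⟨i, hi, h1, h2, h3, h4⟩ := hp
      exact Or.inr ⟨i, hi, h1, h2, ((hpaircell i hi).1).trans h3,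
        ((hpaircell i hi).2).trans h4⟩
  · intro d hd horb' i hi he1 he2
    exact hI.hC5 d hd horb' i hi (((hpaircell i hi).1).symm.trans he1)
      (((hpaircell i hi).2).symm.trans he2)

/-! ### response inside a pair: opponent plays in an empty pair, we answer at the
partner cell with the opposite letter -/

lemma pair_response {P : Set ℕ} {b : Fin n → Option Letter} (hI : GInv P b)
    {i : ℕ} (hi : i ∈ P) (hEmp : bb b i = none ∧ bb b (i+1) = none)
    (y : Letter) (t t' : Fin n)
    (hor : (t.1 = i ∧ t'.1 = i+1) ∨ (t.1 = i+1 ∧ t'.1 = i)) :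
    GInv P (Function.update (Function.update b t (some y)) t' (some (op y))) := by
  set b2 := Function.update (Function.update b t (some y)) t' (some (op y)) with hb2
  have htne : t.1 ≠ t'.1 := by rcases hor with ⟨h1, h2⟩ | ⟨h1, h2⟩ <;> omega
  have hbb2 : ∀ z, bb b2 z = if z = t'.1 then some (op y) else if z = t.1 then some y
      else bb b z := by
    intro z
    rw [hb2, bb_update, bb_update]
  -- cells outside {i, i+1} unchanged
  have houtside : ∀ z, z ≠ i → z ≠ i+1 → bb b2 z = bb b z := by
    intro z hz1 hz2
    rw [hbb2]
    have h1 : z ≠ t'.1 := by rcases hor with ⟨ha, hb⟩ | ⟨ha, hb⟩ <;> omega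
    have h2 : z ≠ t.1 := by rcases hor with ⟨ha, hb⟩ | ⟨ha, hb⟩ <;> omega
    simp [h1, h2]
  -- the pair i is now filled hetero
  have hpair : ∃ x, bb b2 i = some x ∧ bb b2 (i+1) = some (op x) := by
    rcases hor with ⟨h1, h2⟩ | ⟨h1, h2⟩
    · refine ⟨y, ?_, ?_⟩ <;> rw [hbb2]
      · have hne : i ≠ t'.1 := by omega
        rw [if_neg hne, if_pos h1.symm]
      · rw [if_pos h2.symm]
    · refine ⟨op y, ?_, ?_⟩ <;> rw [hbb2]
      · rw [if_pos h2.symm]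
      · have hne : i + 1 ≠ t'.1 := by omega
        rw [if_neg hne, if_pos h1.symm, op_op]
  -- other pairs are untouched
  have hotherpair : ∀ q ∈ P, q ≠ i → bb b2 q = bb b q ∧ bb b2 (q+1) = bb b (q+1) := by
    intro q hq hqi
    have hq1 : q ≠ i + 1 := by
      intro e; exact hI.hdisj i hi (e ▸ hq)
    have hq2 : q + 1 ≠ i := by
      intro e; exact hI.hdisj q hq (e ▸ hi)
    have hq3 : q + 1 ≠ i + 1 := by omega
    exact ⟨houtside q hqi hq1, houtside (q+1) hq2 hq3⟩
  have hdeadpair : ∀ w, w ≤ i → i + 1 ≤ w + 3 → Dead b2 w := by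
    intro w hw1 hw2
    obtain ⟨x, hx1, hx2⟩ := hpair
    exact ⟨i, i+1, x, op x, hw1, by omega, by omega, hw2, hx1, hx2, (op_ne x).symm⟩
  have hstable : ∀ z v, bb b z = some v → bb b2 z = some v := by
    intro z v hz
    have h1 : z ≠ i := fun e => by rw [e, hEmp.1] at hz; cases hz
    have h2 : z ≠ i + 1 := fun e => by rw [e, hEmp.2] at hz; cases hz
    rw [houtside z h1 h2]; exact hz
  constructor
  · exact hI.hbnd
  · exact hI.hdisj
  · intro q hq
    by_cases hqi : q = i
    · subst hqi; exact Or.inr hpair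
    · rw [(hotherpair q hq hqi).1, (hotherpair q hq hqi).2]
      exact hI.hC1 q hq
  · intro w hw
    rcases hI.hC2 w hw with hd | hp
    · exact Or.inl (dead_mono hstable hd)
    · obtain ⟨q, hq, h1, h2, h3, h4⟩ := hp
      by_cases hqi : q = i
      · subst hqi
        exact Or.inl (hdeadpair w h1 h2)
      · exact Or.inr ⟨q, hq, h1, h2, ((hotherpair q hq hqi).1).trans h3,
          ((hotherpair q hq hqi).2).trans h4⟩
  · intro d hd horb' q hq he1 he2
    have hqi : q ≠ i := by
      intro e; subst e
      obtain ⟨x, hx1, _⟩ := hpair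
      rw [he1] at hx1; cases hx1
    exact hI.hC5 d hd horb' q hq (((hotherpair q hq hqi).1).symm.trans he1)
      (((hotherpair q hq hqi).2).symm.trans he2)
/-! ### breaking the leftmost empty pair, when every empty cell lies in a pair -/

lemma break_move {P : Set ℕ} {b : Fin n → Option Letter} (hI : GInv P b)
    (hNoOrb : ∀ c : Fin n, b c = none → ∃ i ∈ P, c.1 = i ∨ c.1 = i+1)
    (hne : ∃ c : Fin n, b c = none) :
    ∃ (c : Fin n) (x : Letter) (P' : Set ℕ), b c = none ∧
      GInv P' (Function.update b c (some x)) := by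
  classical
  set S : Set ℕ := {i | i ∈ P ∧ bb b i = none ∧ bb b (i+1) = none} with hS
  have hcovS : ∀ z, z < n → bb b z = none → ∃ i ∈ S, z = i ∨ z = i+1 := by
    intro z hz hzn
    have hbz : b ⟨z, hz⟩ = none := by
      have := hzn; rwa [bb, dif_pos hz] at this
    obtain ⟨i, hiP, hor⟩ := hNoOrb ⟨z, hz⟩ hbz
    simp only at hor
    rcases hI.hC1 i hiP with hemp | ⟨v, hv1, hv2⟩
    · exact ⟨i, ⟨hiP, hemp⟩, hor⟩
    · exfalso
      rcases hor with h | h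
      · rw [h, hv1] at hzn; cases hzn
      · rw [h, hv2] at hzn; cases hzn
  have hSne : S.Nonempty := by
    obtain ⟨c, hc⟩ := hne
    have hbbc : bb b c.1 = none := by rw [bb_coe]; exact hc
    obtain ⟨i, hiS, _⟩ := hcovS c.1 c.2 hbbc
    exact ⟨i, hiS⟩
  set j := sInf S with hj
  have hjS : j ∈ S := Nat.sInf_mem hSne
  obtain ⟨hjP, hje1, hje2⟩ := hjS
  have hmin : ∀ k ∈ S, j ≤ k := fun k hk => Nat.sInf_le hk
  have hjn : j + 1 < n := hI.hbnd j hjP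
  -- choice of the letter
  obtain ⟨x, hx⟩ : ∃ x : Letter, ∀ j'', j = j'' + 1 → ∃ yl, bb b j'' = some yl ∧ x = op yl := by
    rcases hjeq : j with _ | j'
    · exact ⟨Letter.S, fun j'' h => absurd h (by omega)⟩
    · have hj'n : j' < n := by omega
      have hfill : bb b j' ≠ none := by
        intro hnone
        obtain ⟨i2, hi2S, hor⟩ := hcovS j' hj'n hnone
        have := hmin i2 hi2S
        rcases hor with h | h <;> omega
      obtain ⟨yl, hyl⟩ : ∃ yl, bb b j' = some yl := by
        cases hb : bb b j'
        · exact absurd hb hfill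
        · exact ⟨_, rfl⟩
      refine ⟨op yl, fun j'' h => ?_⟩
      have : j'' = j' := by omega
      exact ⟨yl, this ▸ hyl, rfl⟩
  set c : Fin n := ⟨j+1, hjn⟩ with hc
  have hbc : b c = none := by
    have := hje2; rwa [bb, dif_pos hjn] at this
  refine ⟨c, x, P \ {j}, hbc, ?_⟩
  set b2 := Function.update b c (some x) with hb2
  have hstable : ∀ z v, bb b z = some v → bb b2 z = some v := filled_stable c hbc (some x)
  have hbb2 : ∀ z, bb b2 z = if z = j+1 then some x else bb b z := by
    intro z; rw [hb2, bb_update]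
  have hunch : ∀ z, z ≠ j+1 → bb b2 z = bb b z := by
    intro z hz; rw [hbb2, if_neg hz]
  have hbb2j1 : bb b2 (j+1) = some x := by rw [hbb2, if_pos rfl]
  have hj1P : j + 1 ∉ P := hI.hdisj j hjP
  have hmem : ∀ i, i ∈ P \ ({j} : Set ℕ) ↔ i ∈ P ∧ i ≠ j := by
    intro i; simp [Set.mem_diff]
  have hotherpair : ∀ q ∈ P, q ≠ j → bb b2 q = bb b q ∧ bb b2 (q+1) = bb b (q+1) := by
    intro q hq hqj
    have h1 : q ≠ j + 1 := fun e => hj1P (e ▸ hq)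
    have h2 : q + 1 ≠ j + 1 := by omega
    exact ⟨hunch q h1, hunch (q+1) h2⟩
  constructor
  · intro i hi; exact hI.hbnd i ((hmem i).1 hi).1
  · intro i hi hi1
    exact hI.hdisj i ((hmem i).1 hi).1 ((hmem (i+1)).1 hi1).1
  · intro q hq
    obtain ⟨hqP, hqj⟩ := (hmem q).1 hq
    rw [(hotherpair q hqP hqj).1, (hotherpair q hqP hqj).2]
    exact hI.hC1 q hqP
  · intro w hw
    by_cases hwin : w ≤ j + 1 ∧ j + 1 ≤ w + 3
    · -- window contains the new letter at j+1
      have hcase : (w + 2 = j ∨ w + 1 = j) ∨ (w = j ∨ w = j + 1) := by omega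
      rcases hcase with hL | hR
      · -- the window sees the filled cell j-1 on the left: dead via j-1 vs j+1
        obtain ⟨yl, hyl, hxe⟩ := hx (j-1) (by omega)
        left
        refine ⟨j-1, j+1, yl, x, by omega, by omega, by omega, by omega, ?_, hbb2j1, ?_⟩
        · rw [hunch (j-1) (by omega)]; exact hyl
        · rw [hxe]; exact (op_ne yl).symm
      · obtain ⟨hw1, hw2⟩ : j ≤ w ∧ w ≤ j + 1 := by rcases hR with h | h <;> omega
        have hj3 : j + 3 < n := by omega
        -- the pair (j+2, j+3) exists
        have hj2P : j + 2 ∈ P := by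
          by_contra hnot
          have horb2 : ∀ i ∈ P, j + 2 ≠ i ∧ j + 2 ≠ i + 1 := by
            intro i hiP
            constructor
            · intro e; exact hnot (e ▸ hiP)
            · intro e
              have : i = j + 1 := by omega
              exact hj1P (this ▸ hiP)
          have := hI.hC5 (j+2) (by omega) horb2 j hjP hje1 hje2
          omega
        rcases hI.hC1 (j+2) hj2P with ⟨he1, he2⟩ | ⟨z, hz1, hz2⟩
        · right
          refine ⟨j+2, (hmem _).2 ⟨hj2P, by omega⟩, by omega, by omega, ?_, ?_⟩
          · rw [hunch (j+2) (by omega)]; exact he1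
          · rw [hunch (j+3) (by omega)]; exact he2
        · left
          refine ⟨j+2, j+3, z, op z, by omega, by omega, by omega, by omega, ?_, ?_,
            (op_ne z).symm⟩
          · rw [hunch (j+2) (by omega)]; exact hz1
          · rw [hunch (j+3) (by omega)]; exact hz2
    · -- window untouched
      rcases hI.hC2 w hw with hd | hp
      · exact Or.inl (dead_mono hstable hd)
      · obtain ⟨q, hq, h1, h2, h3, h4⟩ := hp
        have hqj : q ≠ j := by
          intro e; subst e; exact hwin ⟨by omega, by omega⟩
        refine Or.inr ⟨q, (hmem q).2 ⟨hq, hqj⟩, h1, h2, ?_, ?_⟩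
        · rw [(hotherpair q hq hqj).1]; exact h3
        · rw [(hotherpair q hq hqj).2]; exact h4
  · intro d hd horb' q hq' he1 he2
    obtain ⟨hqP, hqj⟩ := (hmem q).1 hq'
    have hcells : bb b q = none ∧ bb b (q+1) = none := by
      constructor
      · rw [← (hotherpair q hqP hqj).1]; exact he1
      · rw [← (hotherpair q hqP hqj).2]; exact he2
    have hqS : q ∈ S := ⟨hqP, hcells⟩
    have hjq : j ≤ q := hmin q hqS
    have hq2 : j + 2 ≤ q := by
      rcases Nat.lt_or_ge (j+1) q with h | h
      · omega
      · have : q = j ∨ q = j + 1 := by omega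
        rcases this with h2 | h2
        · exact absurd h2 hqj
        · exact absurd (h2 ▸ hqP) hj1P
    by_cases hdj : d = j
    · omega
    by_cases hdj1 : d = j + 1
    · omega
    · have horbP : ∀ i ∈ P, d ≠ i ∧ d ≠ i + 1 := by
        intro i hiP
        by_cases hij : i = j
        · subst hij; exact ⟨hdj, hdj1⟩
        · exact horb' i ((hmem i).2 ⟨hiP, hij⟩)
      exact hI.hC5 d hd horbP q hqP hcells.1 hcells.2
/-! ### a single move never completes four equal letters from an invariant position -/

lemma achieves_const {b : Fin n → Option Letter} {x : Letter} (h : Achieves [x,x,x,x] b) :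
    ∃ i, i + 3 < n ∧ ∀ k, k < 4 → bb b (i+k) = some x := by
  obtain ⟨i, hi⟩ := h
  obtain ⟨h3, _⟩ := hi 3 (by norm_num)
  refine ⟨i, h3, fun k hk => ?_⟩
  have hk' : k < ([x,x,x,x] : List Letter).length := by simpa using hk
  obtain ⟨hlt, hc⟩ := hi k hk'
  have hg : ([x,x,x,x] : List Letter).get ⟨k, hk'⟩ = x := by
    interval_cases k <;> rfl
  rw [bb, dif_pos hlt, hc, hg]

lemma no_win_step {P : Set ℕ} {b : Fin n → Option Letter} (hI : GInv P b)
    (t : Fin n) (ht : b t = none) (y : Letter) :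
    ¬ WinSSSSOOOO (Function.update b t (some y)) := by
  intro hwin
  set b1 := Function.update b t (some y) with hb1
  have H : ∃ (x : Letter) (i : ℕ), i + 3 < n ∧ ∀ k, k < 4 → bb b1 (i+k) = some x := by
    rcases hwin with h | h
    · obtain ⟨i, h1, h2⟩ := achieves_const h; exact ⟨_, i, h1, h2⟩
    · obtain ⟨i, h1, h2⟩ := achieves_const h; exact ⟨_, i, h1, h2⟩
  obtain ⟨x, i, hi3, hcell⟩ := H
  rcases hI.hC2 i hi3 with hd | hp
  · obtain ⟨cc, dd, xx, yy, hb1c, hb2c, hb3c, hb4c, hcc, hdd, hne⟩ := hd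
    have hxx : bb b1 cc = some xx := filled_stable t ht _ cc xx hcc
    have hyy : bb b1 dd = some yy := filled_stable t ht _ dd yy hdd
    have e1 := hcell (cc - i) (by omega)
    have e2 := hcell (dd - i) (by omega)
    rw [(by omega : i + (cc - i) = cc), hxx] at e1
    rw [(by omega : i + (dd - i) = dd), hyy] at e2
    exact hne ((Option.some.injEq _ _ ▸ e1 : xx = x).trans
      (Option.some.injEq _ _ ▸ e2 : yy = x).symm)
  · obtain ⟨q, hq, h1, h2, h3, h4⟩ := hp
    obtain ⟨e, hor, hne⟩ : ∃ e, (e = q ∨ e = q+1) ∧ e ≠ t.1 := by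
      by_cases hq1 : q = t.1
      · exact ⟨q+1, Or.inr rfl, by omega⟩
      · exact ⟨q, Or.inl rfl, hq1⟩
    have henone : bb b1 e = bb b e := by
      rw [hb1, bb_update, if_neg hne]
    have hbe : bb b e = none := by rcases hor with h | h <;> (subst h; assumption)
    have := hcell (e - i) (by rcases hor with h | h <;> omega)
    rw [(by rcases hor with h | h <;> omega : i + (e - i) = e), henone, hbe] at this
    cases this

/-! ### the initial invariant -/

def P0 (n : ℕ) : Set ℕ := {i | i + 1 < n ∧ i % 2 = 0}

lemma init_inv : GInv (n := n) (P0 n) (fun _ => none) := by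
  have hbbnone : ∀ z, bb (n := n) (fun _ => none) z = none := by
    intro z; unfold bb; split <;> rfl
  constructor
  · intro i hi; exact hi.1
  · intro i hi hmem
    have h1 : i % 2 = 0 := hi.2
    have h2 : (i+1) % 2 = 0 := hmem.2
    omega
  · intro i _; exact Or.inl ⟨hbbnone _, hbbnone _⟩
  · intro w hw
    right
    by_cases hw2 : w % 2 = 0
    · exact ⟨w, ⟨by omega, hw2⟩, le_refl w, by omega, hbbnone _, hbbnone _⟩
    · exact ⟨w+1, ⟨by omega, by omega⟩, by omega, by omega, hbbnone _, hbbnone _⟩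
  · intro c hc horb i hi _ _
    exfalso
    by_cases hce : c % 2 = 0
    · exact (horb c ⟨hc, hce⟩).1 rfl
    · have hmem : c - 1 ∈ P0 n := ⟨by omega, by omega⟩
      exact (horb (c-1) hmem).2 (by omega)

/-! ### the two move-production lemmas -/

lemma make_move {P : Set ℕ} {b : Fin n → Option Letter} (hI : GInv P b)
    (hne : ∃ c : Fin n, b c = none) :
    ∃ (c : Fin n) (x : Letter) (P' : Set ℕ), b c = none ∧
      GInv P' (Function.update b c (some x)) := by
  by_cases horb : ∃ c : Fin n, b c = none ∧ ∀ i ∈ P, c.1 ≠ i ∧ c.1 ≠ i + 1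
  · obtain ⟨c, hc, ho⟩ := horb
    exact ⟨c, Letter.S, P, hc, orphan_fill hI c hc ho Letter.S⟩
  · have horb' : ∀ c : Fin n, b c = none → ∃ i ∈ P, c.1 = i ∨ c.1 = i + 1 := by
      intro c hc
      by_contra hno
      push_neg at hno
      exact horb ⟨c, hc, hno⟩
    exact break_move hI horb' hne

lemma respond {P : Set ℕ} {b : Fin n → Option Letter} (hI : GInv P b)
    (t : Fin n) (ht : b t = none) (y : Letter)
    (hne : ∃ c : Fin n, Function.update b t (some y) c = none) :
    ∃ (c : Fin n) (x : Letter) (P' : Set ℕ), Function.update b t (some y) c = none ∧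
      GInv P' (Function.update (Function.update b t (some y)) c (some x)) := by
  by_cases hpair : ∃ i ∈ P, t.1 = i ∨ t.1 = i + 1
  · obtain ⟨i, hiP, hor⟩ := hpair
    have hbt : bb b t.1 = none := by rw [bb_coe]; exact ht
    have hEmp : bb b i = none ∧ bb b (i+1) = none := by
      rcases hI.hC1 i hiP with h | ⟨v, hv1, hv2⟩
      · exact h
      · exfalso
        rcases hor with h | h <;> rw [h] at hbt
        · rw [hv1] at hbt; cases hbt
        · rw [hv2] at hbt; cases hbt
    rcases hor with h | h
    · have hin : i + 1 < n := hI.hbnd i hiP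
      set t' : Fin n := ⟨i+1, hin⟩ with ht'
      have htt : t' ≠ t := by
        intro e
        have : t'.1 = t.1 := by rw [e]
        rw [ht'] at this; simp at this; omega
      have hbt' : Function.update b t (some y) t' = none := by
        rw [Function.update_apply, if_neg htt]
        have := hEmp.2; rwa [bb, dif_pos hin] at this
      exact ⟨t', op y, P, hbt', pair_response hI hiP hEmp y t t' (Or.inl ⟨h, rfl⟩)⟩
    · have hin : i < n := by have := hI.hbnd i hiP; omega
      set t' : Fin n := ⟨i, hin⟩ with ht'
      have htt : t' ≠ t := by
        intro e
        have : t'.1 = t.1 := by rw [e]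
        rw [ht'] at this; simp at this; omega
      have hbt' : Function.update b t (some y) t' = none := by
        rw [Function.update_apply, if_neg htt]
        have := hEmp.1; rwa [bb, dif_pos hin] at this
      exact ⟨t', op y, P, hbt', pair_response hI hiP hEmp y t t' (Or.inr ⟨h, rfl⟩)⟩
  · push_neg at hpair
    have hI1 : GInv P (Function.update b t (some y)) := orphan_fill hI t ht hpair y
    exact make_move hI1 hne

/-! ### the main induction -/

theorem main_draw : ∀ (m : ℕ) (b : Fin n → Option Letter) (P : Set ℕ),
    GInv P b → ecount b = m →
    Force WinSSSSOOOO m false b ∧ ¬ Force WinSSSSOOOO m true b := by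
  intro m
  induction m using Nat.strong_induction_on with
  | _ m ih =>
    intro b P hI hcount
    constructor
    · cases m with
      | zero => simp [Force]
      | succ m' =>
        have hne : ∃ c, b c = none := exists_none (by omega)
        obtain ⟨c, x, P', hc, hI'⟩ := make_move hI hne
        refine ⟨c, x, hc, Or.inr ?_⟩
        have hcnt : ecount (Function.update b c (some x)) = m' := by
          rw [ecount_update c hc, hcount]; omega
        exact (ih m' (by omega) _ P' hI' hcnt).2
    · cases m with
      | zero => simp [Force]
      | succ m' =>
        intro h
        obtain ⟨t, y, ht, hor⟩ := h
        rcases hor with hwin | hnf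
        · exact no_win_step hI t ht y hwin
        · apply hnf
          have hb1cnt : ecount (Function.update b t (some y)) = m' := by
            rw [ecount_update t ht, hcount]; omega
          show Force WinSSSSOOOO m' false (Function.update b t (some y))
          cases m' with
          | zero => simp [Force]
          | succ m'' =>
            have hne : ∃ c, Function.update b t (some y) c = none :=
              exists_none (by omega)
            obtain ⟨c, x, P', hc, hI2⟩ := respond hI t ht y hne
            refine ⟨c, x, hc, Or.inr ?_⟩
            have hcnt2 : ecount (Function.update (Function.update b t (some y)) c (some x))
                = m'' := by
              rw [ecount_update c hc, hb1cnt]; omega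
            exact (ih m'' (by omega) _ P' hI2 hcnt2).2

/-- The two-target normal game on the 1×n board, where a player wins by
achieving SSSS or OOOO, is a draw for every `n`: the first player can force at
least a draw and the first player cannot force a win (so the second player can
force at least a draw as well); neither player can force a win. -/
theorem ssss_oooo_game_draw (n : ℕ) :
    Force WinSSSSOOOO n false (fun _ : Fin n => none) ∧
      ¬ Force WinSSSSOOOO n true (fun _ : Fin n => none) :=
  main_draw n (fun _ => none) (P0 n) init_inv ecount_empty
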